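/- Let (Ω, Σ, μ) be an atomless finite measure space, 1 ≤ p < ∞, T a narrow bounded linear operator on L_p(μ), and x, y ∈ L_p(μ) simple functions with Tx = y. Then for each n ∈ ℕ and ε > 0 there exists a partition Ω = A₁ ⊔ ... ⊔ A_{2^n} such that for each k: ‖x·1_{A_k}‖^p = 2^(-n)‖x‖^p, ‖y·1_{A_k}‖^p = 2^(-n)‖y‖^p, and ‖T(x·1_{A_k}) - 2^(-n) y‖ < ε. -/

import Mathlib

open MeasureTheory

variable {Ω : Type*} [MeasurableSpace Ω] {μ : Measure Ω} {pe : ENNReal} [Fact (1 ≤ pe)]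

/-- An operator `T` on `L_p(μ)` is narrow if for every measurable `A` and `ε > 0` there
is `x ∈ L_p(μ)` with `x² = 1_A`, `∫ x dμ = 0` and `‖Tx‖ < ε`. -/
def IsNarrow (μ : Measure Ω) (pe : ENNReal) [Fact (1 ≤ pe)]
    (T : Lp ℝ pe μ →L[ℝ] Lp ℝ pe μ) : Prop :=
  ∀ A : Set Ω, MeasurableSet A → ∀ ε : ℝ, 0 < ε →
    ∃ x : Lp ℝ pe μ, (∀ᵐ ω ∂μ, (x ω) ^ 2 = A.indicator (fun _ => (1 : ℝ)) ω) ∧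
      (∫ ω, x ω ∂μ) = 0 ∧ ‖T x‖ < ε

/-- The restriction `x·1_A` of `x ∈ L_p(μ)` to a measurable set `A`. -/
noncomputable def lpRestrict (x : Lp ℝ pe μ) {A : Set Ω} (hA : MeasurableSet A) :
    Lp ℝ pe μ :=
  MemLp.toLp (A.indicator x) ((Lp.memLp x).indicator hA)

set_option linter.unusedSectionVars false
set_option maxHeartbeats 1000000

lemma lpRestrict_coeFn (x : Lp ℝ pe μ) {A : Set Ω} (hA : MeasurableSet A) :
    ⇑(lpRestrict x hA) =ᵐ[μ] A.indicator x :=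
  MemLp.coeFn_toLp _

set_option linter.unusedSectionVars false
set_option maxHeartbeats 1000000

lemma lp_coeFn_sum {ι : Type*} (s : Finset ι) (f : ι → Lp ℝ pe μ) :
    ⇑(∑ i ∈ s, f i) =ᵐ[μ] fun ω => ∑ i ∈ s, f i ω := by
  classical
  induction s using Finset.induction_on with
  | empty => simp only [Finset.sum_empty]; exact Lp.coeFn_zero ℝ pe μ
  | insert a t hni ih =>
    rw [Finset.sum_insert hni]
    filter_upwards [Lp.coeFn_add (f a) (∑ i ∈ t, f i), ih] with ω h1 h2
    rw [Finset.sum_insert hni, h1, Pi.add_apply, h2]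

/-- The key splitting lemma: any measurable set `A` can be split into `B ⊆ A` and
`A \ B` evenly with respect to every fiber of the pair simple function, with
`‖T(x·1_B) - T(x·1_{A\B})‖` small. -/
lemma split_lemma [IsFiniteMeasure μ]
    (T : Lp ℝ pe μ →L[ℝ] Lp ℝ pe μ) (hT : IsNarrow μ pe T)
    (x : Lp ℝ pe μ) (sx sy : SimpleFunc Ω ℝ) (hxs : ⇑x =ᵐ[μ] sx)
    {A : Set Ω} (hA : MeasurableSet A) (δ : ℝ) (hδ : 0 < δ) :
    ∃ B : Set Ω, ∃ hB : MeasurableSet B, B ⊆ A ∧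
      (∀ c ∈ (sx.pair sy).range, μ (B ∩ (sx.pair sy) ⁻¹' {c})
        = μ ((A \ B) ∩ (sx.pair sy) ⁻¹' {c})) ∧
      ‖T (lpRestrict x hB) - T (lpRestrict x (hA.diff hB))‖ < δ := by
  classical
  set s := sx.pair sy with hs
  set N : ℕ := s.range.card with hN
  have hkey : ∀ c : ℝ × ℝ, ∃ u : Lp ℝ pe μ,
      (∀ᵐ ω ∂μ, (u ω) ^ 2 = (A ∩ s ⁻¹' {c}).indicator (fun _ => (1 : ℝ)) ω) ∧
      (∫ ω, u ω ∂μ) = 0 ∧ ‖T u‖ < δ / ((N + 1) * (1 + |c.1|)) := by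
    intro c
    refine hT (A ∩ s ⁻¹' {c}) (hA.inter (s.measurableSet_fiber c)) _ ?_
    have h1 : (0:ℝ) < N + 1 := by positivity
    have h2 : (0:ℝ) < 1 + |c.1| := by positivity
    positivity
  choose u hu2 hu0 huT using hkey
  -- measurable representatives
  set w : (ℝ × ℝ) → Ω → ℝ := fun c => (Lp.aestronglyMeasurable (u c)).mk _ with hw
  have hwm : ∀ c, StronglyMeasurable (w c) :=
    fun c => (Lp.aestronglyMeasurable (u c)).stronglyMeasurable_mk
  have hwae : ∀ c, ⇑(u c) =ᵐ[μ] w c := fun c => (Lp.aestronglyMeasurable (u c)).ae_eq_mk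
  set D : (ℝ × ℝ) → Set Ω := fun c => A ∩ s ⁻¹' {c} with hD
  have hDm : ∀ c, MeasurableSet (D c) := fun c => hA.inter (s.measurableSet_fiber c)
  set P : (ℝ × ℝ) → Set Ω := fun c => D c ∩ (w c) ⁻¹' {1} with hP
  have hPm : ∀ c, MeasurableSet (P c) :=
    fun c => (hDm c).inter ((hwm c).measurable (measurableSet_singleton 1))
  have hPD : ∀ c, P c ⊆ D c := fun c => Set.inter_subset_left
  set B : Set Ω := ⋃ c ∈ s.range, P c with hB
  have hBm : MeasurableSet B :=
    MeasurableSet.biUnion s.range.countable_toSet (fun c _ => hPm c)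
  have hBA : B ⊆ A := by
    intro ω hω
    simp only [hB, Set.mem_iUnion] at hω
    obtain ⟨c, _, hω⟩ := hω
    exact ((hPD c) hω).1
  -- a.e. dichotomy for w c
  have hwd : ∀ c, ∀ᵐ ω ∂μ, w c ω
      = (P c).indicator (fun _ => (1:ℝ)) ω - (D c \ P c).indicator (fun _ => (1:ℝ)) ω := by
    intro c
    filter_upwards [hu2 c, hwae c] with ω h2 hweq
    rw [hweq] at h2
    by_cases hωD : ω ∈ D c
    · rw [Set.indicator_of_mem hωD] at h2
      have : (w c ω - 1) * (w c ω + 1) = 0 := by linear_combination h2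
      rcases mul_eq_zero.mp this with h | h
      · have h1 : w c ω = 1 := by linarith
        have hωP : ω ∈ P c := ⟨hωD, h1⟩
        rw [Set.indicator_of_mem hωP, Set.indicator_of_notMem (by simp [Set.mem_diff, hωP]), h1]
        ring
      · have h1 : w c ω = -1 := by linarith
        have hωP : ω ∉ P c := by
          intro hωP
          have h1' : w c ω = 1 := hωP.2
          rw [h1] at h1'; norm_num at h1'
        rw [Set.indicator_of_notMem hωP, Set.indicator_of_mem (show ω ∈ D c \ P c from ⟨hωD, hωP⟩), h1]
        ring
    · rw [Set.indicator_of_notMem hωD] at h2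
      have h1 : w c ω = 0 := pow_eq_zero_iff two_ne_zero |>.mp h2
      rw [Set.indicator_of_notMem (fun h => hωD (hPD c h)),
        Set.indicator_of_notMem (fun h => hωD h.1), h1]
      ring
  -- equal measures of the two halves of each fiber
  have hmeas_eq : ∀ c, μ (P c) = μ (D c \ P c) := by
    intro c
    have hint1 : Integrable ((P c).indicator (fun _ => (1:ℝ))) μ :=
      (integrable_const (1:ℝ)).indicator (hPm c)
    have hint2 : Integrable ((D c \ P c).indicator (fun _ => (1:ℝ))) μ :=
      (integrable_const (1:ℝ)).indicator ((hDm c).diff (hPm c))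
    have h0 : ∫ ω, ((P c).indicator (fun _ => (1:ℝ)) ω
        - (D c \ P c).indicator (fun _ => (1:ℝ)) ω) ∂μ = 0 := by
      rw [← hu0 c]
      refine integral_congr_ae ?_
      filter_upwards [hwd c, hwae c] with ω h1 h2
      rw [h2, h1]
    rw [integral_sub hint1 hint2, integral_indicator_const _ (hPm c),
      integral_indicator_const _ ((hDm c).diff (hPm c)), smul_eq_mul, smul_eq_mul,
      mul_one, mul_one, sub_eq_zero] at h0
    exact (ENNReal.toReal_eq_toReal_iff' (measure_ne_top μ _) (measure_ne_top μ _)).mp h0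
  -- identification of B ∩ fiber and (A \ B) ∩ fiber
  have hBfiber : ∀ c ∈ s.range, B ∩ s ⁻¹' {c} = P c := by
    intro c hc
    ext ω
    simp only [hB, Set.mem_inter_iff, Set.mem_iUnion, Set.mem_preimage, Set.mem_singleton_iff]
    constructor
    · rintro ⟨⟨c', hc', hωP⟩, hωc⟩
      have : c' = c := by
        have := (hPD c' hωP).2
        rw [Set.mem_preimage, Set.mem_singleton_iff] at this
        rw [← this, hωc]
      rwa [← this]
    · intro hωP
      have := (hPD c hωP).2
      rw [Set.mem_preimage, Set.mem_singleton_iff] at this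
      exact ⟨⟨c, hc, hωP⟩, this⟩
  have hPB : ∀ c ∈ s.range, P c ⊆ B := by
    intro c hc ω hω
    simp only [hB, Set.mem_iUnion]
    exact ⟨c, hc, hω⟩
  have hABfiber : ∀ c ∈ s.range, (A \ B) ∩ s ⁻¹' {c} = D c \ P c := by
    intro c hc
    ext ω
    constructor
    · rintro ⟨⟨hωA, hωB⟩, hωc⟩
      exact ⟨⟨hωA, hωc⟩, fun hωP => hωB (hPB c hc hωP)⟩
    · rintro ⟨⟨hωA, hωc⟩, hωP⟩
      refine ⟨⟨hωA, ?_⟩, hωc⟩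
      intro hωB
      simp only [hB, Set.mem_iUnion] at hωB
      obtain ⟨c', hc', hω'⟩ := hωB
      have hc'eq : c' = c := by
        have h1 : s ω = c' := (hPD c' hω').2
        have h2 : s ω = c := hωc
        rw [← h1, h2]
      rw [hc'eq] at hω'
      exact hωP hω'
  refine ⟨B, hBm, hBA, fun c hc => by rw [hBfiber c hc, hABfiber c hc, hmeas_eq c], ?_⟩
  -- the Lp identity
  have hsum : lpRestrict x hBm - lpRestrict x (hA.diff hBm) = ∑ c ∈ s.range, c.1 • u c := by
    refine Lp.ext ?_
    have haeu : ∀ᵐ ω ∂μ, ∀ c ∈ (s.range : Set (ℝ × ℝ)),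
        ((u c) ω ^ 2 = (D c).indicator (fun _ => (1:ℝ)) ω ∧ (u c) ω = w c ω
          ∧ (c.1 • u c) ω = c.1 * u c ω) := by
      rw [ae_ball_iff s.range.countable_toSet]
      intro c hc
      filter_upwards [hu2 c, hwae c, Lp.coeFn_smul c.1 (u c)] with ω h1 h2 h3
      exact ⟨h1, h2, by rw [h3]; rfl⟩
    filter_upwards [Lp.coeFn_sub (lpRestrict x hBm) (lpRestrict x (hA.diff hBm)),
      lpRestrict_coeFn x hBm, lpRestrict_coeFn x (hA.diff hBm), hxs, haeu,
      lp_coeFn_sum s.range (fun c => c.1 • u c)] with ω hsub hB1 hB2 hx h_u hsumeq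
    rw [hsub, Pi.sub_apply, hB1, hB2, hsumeq]
    by_cases hωA : ω ∈ A
    · set c₀ : ℝ × ℝ := s ω with hc₀def
      have hc₀ : c₀ ∈ s.range := s.mem_range_self ω
      have hωD : ω ∈ D c₀ := ⟨hωA, rfl⟩
      have hsum0 : ∑ c ∈ s.range, (c.1 • u c) ω = c₀.1 * u c₀ ω := by
        rw [Finset.sum_eq_single_of_mem c₀ hc₀ ?_]
        · exact (h_u c₀ hc₀).2.2
        · intro b hb hbne
          rw [(h_u b hb).2.2]
          have hb2 := (h_u b hb).1
          have hωb : ω ∉ D b := by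
            rintro ⟨-, hωb⟩
            exact hbne ((Set.mem_singleton_iff.mp hωb).symm.trans hc₀def.symm)
          rw [Set.indicator_of_notMem hωb] at hb2
          have : u b ω = 0 := pow_eq_zero_iff two_ne_zero |>.mp hb2
          rw [this, mul_zero]
      rw [hsum0]
      have hxc : c₀.1 = x ω := by
        rw [hx]; rfl
      have hd := (h_u c₀ hc₀).1
      rw [Set.indicator_of_mem hωD] at hd
      have hfac : (u c₀ ω - 1) * (u c₀ ω + 1) = 0 := by linear_combination hd
      rcases mul_eq_zero.mp hfac with h | h
      · have h1 : u c₀ ω = 1 := by linarith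
        have hωP : ω ∈ P c₀ := ⟨hωD, by
          have := (h_u c₀ hc₀).2.1
          rw [Set.mem_preimage, Set.mem_singleton_iff, ← this, h1]⟩
        have hωB : ω ∈ B := hPB c₀ hc₀ hωP
        rw [Set.indicator_of_mem hωB, Set.indicator_of_notMem (fun h => h.2 hωB), h1, hxc]
        ring
      · have h1 : u c₀ ω = -1 := by linarith
        have hωB : ω ∉ B := by
          intro hωB
          simp only [hB, Set.mem_iUnion] at hωB
          obtain ⟨c', hc', hω'⟩ := hωB
          have hc'eq : c' = c₀ := by
            have h2 : s ω = c' := (hPD c' hω').2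
            rw [← h2]
          rw [hc'eq] at hω'
          have hw1 : w c₀ ω = 1 := hω'.2
          have := (h_u c₀ hc₀).2.1
          rw [hw1] at this
          rw [this] at h1
          norm_num at h1
        rw [Set.indicator_of_notMem hωB, Set.indicator_of_mem (show ω ∈ A \ B from ⟨hωA, hωB⟩), h1, hxc]
        ring
    · have hωB : ω ∉ B := fun h => hωA (hBA h)
      rw [Set.indicator_of_notMem hωB, Set.indicator_of_notMem (fun h => hωA h.1)]
      rw [Finset.sum_congr rfl (fun c hc => ?_), Finset.sum_const_zero]
      · ring
      rw [(h_u c hc).2.2]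
      have hc2 := (h_u c hc).1
      rw [Set.indicator_of_notMem (fun h => hωA h.1)] at hc2
      have : u c ω = 0 := pow_eq_zero_iff two_ne_zero |>.mp hc2
      rw [this, mul_zero]
  -- the norm bound
  have hmap : T (lpRestrict x hBm) - T (lpRestrict x (hA.diff hBm))
      = ∑ c ∈ s.range, c.1 • T (u c) := by
    rw [← map_sub, hsum, map_sum]
    exact Finset.sum_congr rfl fun c _ => map_smul T c.1 (u c)
  rw [hmap]
  have hNd : (0:ℝ) < (N:ℝ) + 1 := by positivity
  calc ‖∑ c ∈ s.range, c.1 • T (u c)‖ ≤ ∑ c ∈ s.range, ‖c.1 • T (u c)‖ :=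
        norm_sum_le _ _
    _ ≤ ∑ _c ∈ s.range, δ / ((N:ℝ) + 1) := by
        refine Finset.sum_le_sum fun c _ => ?_
        rw [norm_smul, Real.norm_eq_abs]
        have h1 : |c.1| * ‖T (u c)‖ ≤ (1 + |c.1|) * ‖T (u c)‖ := by
          have := norm_nonneg (T (u c)); nlinarith [abs_nonneg c.1]
        have h2 : (1 + |c.1|) * ‖T (u c)‖ ≤ (1 + |c.1|) * (δ / (((N:ℝ) + 1) * (1 + |c.1|))) := by
          have hpos : (0:ℝ) < 1 + |c.1| := by positivity
          exact mul_le_mul_of_nonneg_left (le_of_lt (huT c)) hpos.le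
        have h3 : (1 + |c.1|) * (δ / (((N:ℝ) + 1) * (1 + |c.1|))) = δ / ((N:ℝ) + 1) := by
          have hpos : (1 + |c.1|) ≠ 0 := by positivity
          field_simp
        linarith
    _ = (N:ℝ) * (δ / ((N:ℝ) + 1)) := by
        rw [Finset.sum_const, nsmul_eq_mul, hN]
    _ < δ := by
        have h1 : (N:ℝ) / ((N:ℝ) + 1) < 1 := by
          rw [div_lt_one hNd]; linarith
        have h2 : (N:ℝ) * (δ / ((N:ℝ) + 1)) = δ * ((N:ℝ) / ((N:ℝ) + 1)) := by ring
        rw [h2]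
        nlinarith
lemma setIntegral_comp_simpleFunc [IsFiniteMeasure μ] (s : SimpleFunc Ω (ℝ × ℝ))
    (g : ℝ × ℝ → ℝ) {B : Set Ω} (hB : MeasurableSet B) :
    ∫ ω in B, g (s ω) ∂μ = ∑ c ∈ s.range, g c * (μ (B ∩ s ⁻¹' {c})).toReal := by
  have hcover : B = ⋃ c ∈ s.range, B ∩ s ⁻¹' {c} := by
    ext ω
    simp only [Set.mem_iUnion, Set.mem_inter_iff, Set.mem_preimage, Set.mem_singleton_iff]
    constructor
    · intro h; exact ⟨s ω, s.mem_range_self ω, h, rfl⟩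
    · rintro ⟨c, _, h, _⟩; exact h
  have hint : Integrable (fun ω => g (s ω)) μ := (s.map g).integrable_of_isFiniteMeasure
  conv_lhs => rw [hcover]
  rw [integral_biUnion_finset s.range (fun c _ => hB.inter (s.measurableSet_fiber c))
    ?_ (fun c _ => hint.integrableOn)]
  · refine Finset.sum_congr rfl fun c hc => ?_
    rw [setIntegral_congr_fun (hB.inter (s.measurableSet_fiber c))
      (g := fun _ => g c) (fun ω hω => by rw [show s ω = c from hω.2]),
      setIntegral_const, smul_eq_mul, mul_comm, measureReal_def]
  · intro c hc c' hc' hne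
    refine Set.disjoint_left.mpr ?_
    rintro ω ⟨_, h1⟩ ⟨_, h2⟩
    exact hne ((Set.mem_singleton_iff.mp h1).symm.trans (Set.mem_singleton_iff.mp h2))
lemma lpRestrict_congr_set (x : Lp ℝ pe μ) {A B : Set Ω} (hA : MeasurableSet A)
    (hB : MeasurableSet B) (h : A = B) : lpRestrict x hA = lpRestrict x hB := by
  subst h; rfl

lemma lpRestrict_union (x : Lp ℝ pe μ) {A B : Set Ω} (hA : MeasurableSet A)
    (hB : MeasurableSet B) (hd : Disjoint A B) :
    lpRestrict x hA + lpRestrict x hB = lpRestrict x (hA.union hB) := by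
  refine Lp.ext ?_
  filter_upwards [Lp.coeFn_add (lpRestrict x hA) (lpRestrict x hB),
    lpRestrict_coeFn x hA, lpRestrict_coeFn x hB, lpRestrict_coeFn x (hA.union hB)]
    with ω h1 h2 h3 h4
  rw [h1, Pi.add_apply, h2, h3, h4, Set.indicator_union_of_disjoint hd]

lemma lpRestrict_univ (x : Lp ℝ pe μ) : lpRestrict x (MeasurableSet.univ (α := Ω)) = x := by
  refine Lp.ext ?_
  filter_upwards [lpRestrict_coeFn x (MeasurableSet.univ (α := Ω))] with ω h1
  rw [h1, Set.indicator_univ]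

lemma main_ind [IsFiniteMeasure μ]
    (T : Lp ℝ pe μ →L[ℝ] Lp ℝ pe μ) (hT : IsNarrow μ pe T)
    (x y : Lp ℝ pe μ) (sx sy : SimpleFunc Ω ℝ) (hxs : ⇑x =ᵐ[μ] sx)
    (hy : T x = y) (n : ℕ) :
    ∀ ε : ℝ, 0 < ε → ∃ A : Fin (2 ^ n) → Set Ω, ∃ hA : ∀ k, MeasurableSet (A k),
      Pairwise (Function.onFun Disjoint A) ∧ (⋃ k, A k) = Set.univ ∧
      ∀ k, (∀ c ∈ (sx.pair sy).range,
          2 ^ n * μ (A k ∩ (sx.pair sy) ⁻¹' {c}) = μ ((sx.pair sy) ⁻¹' {c})) ∧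
        ‖T (lpRestrict x (hA k)) - ((2 : ℝ) ^ n)⁻¹ • y‖ < ε := by
  induction n with
  | zero =>
    intro ε hε
    refine ⟨fun _ => Set.univ, fun _ => MeasurableSet.univ, ?_, ?_, ?_⟩
    · intro i j hij; exact absurd (Fin.ext (by omega)) hij
    · haveI : Nonempty (Fin (2 ^ 0)) := ⟨⟨0, by norm_num⟩⟩
      exact Set.iUnion_const _
    · intro k
      refine ⟨fun c hc => by simp, ?_⟩
      rw [lpRestrict_univ, hy]
      simpa using hε
  | succ n ih =>
    intro ε hε
    obtain ⟨A, hA, hdisj, hunion, hprop⟩ := ih (ε / 2) (by linarith)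
    have hsplit := fun k : Fin (2 ^ n) => split_lemma T hT x sx sy hxs (hA k) ε hε
    choose B hBm hBsub hBfib hBnorm using hsplit
    set e : Fin (2 ^ n) × Fin 2 ≃ Fin (2 ^ (n + 1)) :=
      finProdFinEquiv.trans (finCongr (pow_succ 2 n).symm) with he
    set A' : Fin (2 ^ (n + 1)) → Set Ω := fun k =>
      if (e.symm k).2 = 0 then B (e.symm k).1 else A (e.symm k).1 \ B (e.symm k).1 with hA'def
    have hA' : ∀ k, MeasurableSet (A' k) := by
      intro k
      simp only [hA'def]
      split_ifs
      · exact hBm _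
      · exact (hA _).diff (hBm _)
    have hsub' : ∀ k, A' k ⊆ A (e.symm k).1 := by
      intro k
      simp only [hA'def]
      split_ifs
      · exact hBsub _
      · exact Set.diff_subset
    refine ⟨A', hA', ?_, ?_, ?_⟩
    · -- pairwise disjoint
      intro k k' hne
      have hzne : e.symm k ≠ e.symm k' := fun h => hne (by
        have := congrArg e h; simpa using this)
      by_cases hj : (e.symm k).1 = (e.symm k').1
      · have hb : (e.symm k).2 ≠ (e.symm k').2 := by
          intro hb; exact hzne (Prod.ext hj hb)
        simp only [Function.onFun, hA'def]
        by_cases h0 : (e.symm k).2 = 0 <;> by_cases h0' : (e.symm k').2 = 0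
        · exact absurd (h0.trans h0'.symm) hb
        · rw [if_pos h0, if_neg h0', ← hj]
          exact Set.disjoint_sdiff_right
        · rw [if_neg h0, if_pos h0', ← hj]
          exact Set.disjoint_sdiff_left
        · exact absurd (by omega : (e.symm k).2 = (e.symm k').2) hb
      · exact Set.disjoint_of_subset (hsub' k) (hsub' k')
          (hdisj hj)
    · -- union is univ
      rw [Set.eq_univ_iff_forall]
      intro ω
      have hω : ω ∈ ⋃ j, A j := by rw [hunion]; trivial
      rw [Set.mem_iUnion] at hω
      obtain ⟨j, hωj⟩ := hω
      rw [Set.mem_iUnion]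
      by_cases hωB : ω ∈ B j
      · exact ⟨e (j, 0), by simp only [hA'def, Equiv.symm_apply_apply]; exact hωB⟩
      · refine ⟨e (j, 1), ?_⟩
        simp only [hA'def, Equiv.symm_apply_apply]
        norm_num
        exact ⟨hωj, hωB⟩
    · -- the two estimates
      intro k
      set j := (e.symm k).1 with hj
      -- halving of fiber measures
      have hfib' : ∀ c ∈ (sx.pair sy).range,
          2 * μ (B j ∩ (sx.pair sy) ⁻¹' {c}) = μ (A j ∩ (sx.pair sy) ⁻¹' {c}) := by
        intro c hc
        have hdisj2 : Disjoint (B j ∩ (sx.pair sy) ⁻¹' {c})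
            ((A j \ B j) ∩ (sx.pair sy) ⁻¹' {c}) :=
          Set.disjoint_of_subset Set.inter_subset_left Set.inter_subset_left
            Set.disjoint_sdiff_right
        have hu : (B j ∩ (sx.pair sy) ⁻¹' {c}) ∪ ((A j \ B j) ∩ (sx.pair sy) ⁻¹' {c})
            = A j ∩ (sx.pair sy) ⁻¹' {c} := by
          rw [← Set.union_inter_distrib_right, Set.union_diff_cancel (hBsub j)]
        rw [← hu, measure_union hdisj2 (((hA j).diff (hBm j)).inter
          ((sx.pair sy).measurableSet_fiber c)), ← hBfib j c hc, two_mul]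
      have hfibAB : ∀ c ∈ (sx.pair sy).range,
          2 * μ ((A j \ B j) ∩ (sx.pair sy) ⁻¹' {c}) = μ (A j ∩ (sx.pair sy) ⁻¹' {c}) := by
        intro c hc
        rw [← hBfib j c hc]
        exact hfib' c hc
      -- Lp identities
      have hTeq : T (lpRestrict x (hBm j)) + T (lpRestrict x ((hA j).diff (hBm j)))
          = T (lpRestrict x (hA j)) := by
        rw [← map_add, lpRestrict_union x (hBm j) ((hA j).diff (hBm j))
          Set.disjoint_sdiff_right]
        congr 1
        exact lpRestrict_congr_set x _ _ (Set.union_diff_cancel (hBsub j))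
      have hcinv : ((2 : ℝ) ^ (n + 1))⁻¹ = 2⁻¹ * ((2 : ℝ) ^ n)⁻¹ := by
        rw [pow_succ, mul_inv]; ring
      have hold := (hprop j).2
      have hd := hBnorm j
      -- the two cases
      have hgoal : ∀ c2 : Fin 2, (if c2 = 0 then
          ‖T (lpRestrict x (hBm j)) - ((2 : ℝ) ^ (n + 1))⁻¹ • y‖ else
          ‖T (lpRestrict x ((hA j).diff (hBm j))) - ((2 : ℝ) ^ (n + 1))⁻¹ • y‖) < ε := by
        intro c2
        have h1 : T (lpRestrict x (hBm j)) - ((2 : ℝ) ^ (n + 1))⁻¹ • y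
            = (2⁻¹ : ℝ) • ((T (lpRestrict x (hA j)) - ((2 : ℝ) ^ n)⁻¹ • y)
              + (T (lpRestrict x (hBm j)) - T (lpRestrict x ((hA j).diff (hBm j))))) := by
          rw [hcinv, ← hTeq]
          module
        have h2 : T (lpRestrict x ((hA j).diff (hBm j))) - ((2 : ℝ) ^ (n + 1))⁻¹ • y
            = (2⁻¹ : ℝ) • ((T (lpRestrict x (hA j)) - ((2 : ℝ) ^ n)⁻¹ • y)
              - (T (lpRestrict x (hBm j)) - T (lpRestrict x ((hA j).diff (hBm j))))) := by
          rw [hcinv, ← hTeq]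
          module
        split_ifs
        · rw [h1, norm_smul]
          have := norm_add_le (T (lpRestrict x (hA j)) - ((2 : ℝ) ^ n)⁻¹ • y)
            (T (lpRestrict x (hBm j)) - T (lpRestrict x ((hA j).diff (hBm j))))
          simp only [norm_inv, Real.norm_ofNat]
          nlinarith [norm_nonneg (T (lpRestrict x (hA j)) - ((2 : ℝ) ^ n)⁻¹ • y)]
        · rw [h2, norm_smul]
          have := norm_sub_le (T (lpRestrict x (hA j)) - ((2 : ℝ) ^ n)⁻¹ • y)
            (T (lpRestrict x (hBm j)) - T (lpRestrict x ((hA j).diff (hBm j))))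
          simp only [norm_inv, Real.norm_ofNat]
          nlinarith [norm_nonneg (T (lpRestrict x (hA j)) - ((2 : ℝ) ^ n)⁻¹ • y)]
      constructor
      · intro c hc
        have hAk : 2 ^ n * μ (A j ∩ (sx.pair sy) ⁻¹' {c}) = μ ((sx.pair sy) ⁻¹' {c}) :=
          (hprop j).1 c hc
        by_cases h0 : (e.symm k).2 = 0
        · have : A' k = B j := by simp only [hA'def]; rw [if_pos h0]
          rw [this, pow_succ, mul_assoc, hfib' c hc, hAk]
        · have : A' k = A j \ B j := by simp only [hA'def]; rw [if_neg h0]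
          rw [this, pow_succ, mul_assoc, hfibAB c hc, hAk]
      · have := hgoal (e.symm k).2
        by_cases h0 : (e.symm k).2 = 0
        · rw [if_pos h0] at this
          have hAk : A' k = B j := by simp only [hA'def]; rw [if_pos h0]
          convert this using 4
          exact lpRestrict_congr_set x _ _ hAk
        · rw [if_neg h0] at this
          have hAk : A' k = A j \ B j := by simp only [hA'def]; rw [if_neg h0]
          convert this using 4
          exact lpRestrict_congr_set x _ _ hAk
lemma norm_rpow_eq (p : ℝ) (hp : 1 ≤ p) (hpe : pe = ENNReal.ofReal p) (f : Lp ℝ pe μ) :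
    ‖f‖ ^ p = ∫ ω, |f ω| ^ p ∂μ := by
  have hp0 : 0 < p := lt_of_lt_of_le one_pos hp
  have hpe0 : pe ≠ 0 := by
    rw [hpe]; simpa [ENNReal.ofReal_eq_zero, not_le] using hp0
  have hpet : pe ≠ ⊤ := by rw [hpe]; exact ENNReal.ofReal_ne_top
  have htr : pe.toReal = p := by rw [hpe, ENNReal.toReal_ofReal hp0.le]
  have h := (Lp.memLp f).eLpNorm_eq_integral_rpow_norm hpe0 hpet
  have hI : 0 ≤ ∫ ω, |f ω| ^ p ∂μ := by
    apply integral_nonneg; intro ω; positivity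
  have hnorm : ‖f‖ = (∫ ω, |f ω| ^ p ∂μ) ^ p⁻¹ := by
    rw [Lp.norm_def, h, htr, ENNReal.toReal_ofReal]
    · simp [Real.norm_eq_abs]
    · positivity
  rw [hnorm, Real.rpow_inv_rpow hI hp0.ne']

/-- For a narrow `T` on `L_p(μ)` over an atomless finite measure and simple functions
`x, y` with `Tx = y`, for each `n` and `ε > 0` there is a partition
`Ω = A₁ ⊔ … ⊔ A_{2^n}` with `‖x1_{A_k}‖^p = 2^{-n}‖x‖^p`,
`‖y1_{A_k}‖^p = 2^{-n}‖y‖^p` and `‖T(x1_{A_k}) - 2^{-n} y‖ < ε` for all `k`. -/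
theorem stmt16 [IsFiniteMeasure μ]
    (hμ : ∀ A : Set Ω, MeasurableSet A → 0 < μ A →
      ∃ B ⊆ A, MeasurableSet B ∧ 0 < μ B ∧ μ B < μ A)
    (p : ℝ) (hp : 1 ≤ p) (hpe : pe = ENNReal.ofReal p)
    (T : Lp ℝ pe μ →L[ℝ] Lp ℝ pe μ) (hT : IsNarrow μ pe T)
    (x y : Lp ℝ pe μ) (sx sy : SimpleFunc Ω ℝ)
    (hxs : (x : Ω → ℝ) =ᵐ[μ] sx) (hys : (y : Ω → ℝ) =ᵐ[μ] sy)
    (hy : T x = y) (n : ℕ) (ε : ℝ) (hε : 0 < ε) :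
    ∃ A : Fin (2 ^ n) → Set Ω, ∃ hA : ∀ k, MeasurableSet (A k),
      Pairwise (Function.onFun Disjoint A) ∧ (⋃ k, A k) = Set.univ ∧
      ∀ k, ‖lpRestrict x (hA k)‖ ^ p = ((2 : ℝ) ^ n)⁻¹ * ‖x‖ ^ p ∧
        ‖lpRestrict y (hA k)‖ ^ p = ((2 : ℝ) ^ n)⁻¹ * ‖y‖ ^ p ∧
        ‖T (lpRestrict x (hA k)) - ((2 : ℝ) ^ n)⁻¹ • y‖ < ε := by
  obtain ⟨A, hA, hdisj, hunion, hprop⟩ := main_ind T hT x y sx sy hxs hy n ε hε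
  refine ⟨A, hA, hdisj, hunion, fun k => ?_⟩
  obtain ⟨hfib, hnorm⟩ := hprop k
  set s : SimpleFunc Ω (ℝ × ℝ) := sx.pair sy with hs
  have hp0 : (0:ℝ) < p := lt_of_lt_of_le one_pos hp
  have h2n : (0:ℝ) < (2:ℝ) ^ n := by positivity
  have htR : ∀ c ∈ s.range, (μ (A k ∩ s ⁻¹' {c})).toReal
      = ((2:ℝ) ^ n)⁻¹ * (μ (s ⁻¹' {c})).toReal := by
    intro c hc
    have h := congrArg ENNReal.toReal (hfib c hc)
    rw [ENNReal.toReal_mul] at h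
    have h2 : ((2:ENNReal) ^ n).toReal = (2:ℝ) ^ n := by simp
    rw [h2] at h
    rw [← h]
    field_simp
  have key : ∀ (f : Lp ℝ pe μ) (g : ℝ × ℝ → ℝ), (∀ᵐ ω ∂μ, |f ω| ^ p = g (s ω)) →
      ‖lpRestrict f (hA k)‖ ^ p = ((2:ℝ) ^ n)⁻¹ * ‖f‖ ^ p := by
    intro f g hfg
    have h1 : ‖lpRestrict f (hA k)‖ ^ p = ∫ ω in A k, g (s ω) ∂μ := by
      rw [norm_rpow_eq p hp hpe, ← integral_indicator (hA k)]
      refine integral_congr_ae ?_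
      filter_upwards [lpRestrict_coeFn f (hA k), hfg] with ω h2 h3
      rw [h2]
      by_cases hω : ω ∈ A k
      · rw [Set.indicator_of_mem hω, Set.indicator_of_mem hω, ← h3]
      · rw [Set.indicator_of_notMem hω, Set.indicator_of_notMem hω, abs_zero,
          Real.zero_rpow hp0.ne']
    have h2 : ‖f‖ ^ p = ∫ ω in Set.univ, g (s ω) ∂μ := by
      rw [norm_rpow_eq p hp hpe, setIntegral_univ]
      exact integral_congr_ae hfg
    rw [h1, h2, setIntegral_comp_simpleFunc s g (hA k),
      setIntegral_comp_simpleFunc s g MeasurableSet.univ, Finset.mul_sum]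
    refine Finset.sum_congr rfl fun c hc => ?_
    rw [htR c hc, Set.univ_inter]
    ring
  refine ⟨?_, ?_, hnorm⟩
  · exact key x (fun c => |c.1| ^ p) (by filter_upwards [hxs] with ω h; rw [h]; rfl)
  · exact key y (fun c => |c.2| ^ p) (by filter_upwards [hys] with ω h; rw [h]; rfl)
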